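/- arXiv:1410.7021 — 2 statements merged into one kernel-verified Lean document; each statement's English description precedes it below -/
import Mathlib

section
/- Let n ≥ 1, let A be an abelian group and let Φ : 𝒫^n_o → A be a valuation. Define Ψ : 𝒫^n → A by Ψ(P) = Φ(conv({o} ∪ P)) for all P ∈ 𝒫^n. Then Ψ is a valuation on 𝒫^n. -/
open scoped Pointwise
open MeasureTheory Set

noncomputable section

abbrev Euc (n : ℕ) := EuclideanSpace ℝ (Fin n)

/-- `P` is a convex polytope in `ℝ^n`: the convex hull of a nonempty finite set. -/
def IsPolytope (n : ℕ) (P : Set (Euc n)) : Prop :=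
  ∃ S : Finset (Euc n), S.Nonempty ∧ P = convexHull ℝ (S : Set (Euc n))

/-- Support function `h(K, u)`. -/
def suppFn {n : ℕ} (K : Set (Euc n)) (u : Euc n) : ℝ :=
  sSup ((fun x => (inner ℝ x u : ℝ)) '' K)

/-- The face `F(P, v) = P ∩ {x : ⟪x, v⟫ = h(P, v)}`. -/
def face {n : ℕ} (P : Set (Euc n)) (v : Euc n) : Set (Euc n) :=
  {x | x ∈ P ∧ (inner ℝ x v : ℝ) = suppFn P v}

/-- `(n-1)`-dimensional volume ((n-1)-dimensional Hausdorff measure). -/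
def voln1 {n : ℕ} (s : Set (Euc n)) : ℝ :=
  (Measure.hausdorffMeasure ((n : ℝ) - 1) s).toReal

/-- Dimension of a convex set: the rank of its vector span (direction of its affine hull). -/
def pdim {n : ℕ} (P : Set (Euc n)) : ℕ := Module.finrank ℝ (vectorSpan ℝ P)

/-- `𝒩(P)`: unit outer normals of facets of `P`. -/
def normals (n : ℕ) (P : Set (Euc n)) : Set (Euc n) :=
  {v | ‖v‖ = 1 ∧ pdim (face P v) = n - 1}

/-- Application of a matrix to a vector of `ℝ^n`. -/
def apM {n : ℕ} (A : Matrix (Fin n) (Fin n) ℝ) (x : Euc n) : Euc n :=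
  (EuclideanSpace.equiv (Fin n) ℝ).symm (A.mulVec (EuclideanSpace.equiv (Fin n) ℝ x))

/-- Image of a set under a matrix. -/
def mapM {n : ℕ} (A : Matrix (Fin n) (Fin n) ℝ) (P : Set (Euc n)) : Set (Euc n) :=
  apM A '' P

/-- The standard basis vectors `e i`. -/
def ee (n : ℕ) (i : Fin n) : Euc n := EuclideanSpace.single i 1

/-- The standard simplex `T^n = conv{o, e₁, …, e_n}`. -/
def stdSimp (n : ℕ) : Set (Euc n) := convexHull ℝ (insert 0 (Set.range (ee n)))

/-- `h(Π_p^{±,>} P, u)^p` (for `gt = true`) resp. `h(Π_p^{±,<} P, u)^p` (for `gt = false`),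
where `pos = true` gives the `+` (positive part) version and `pos = false` the `−` version. -/
def projFn (n : ℕ) (p : ℝ) (pos gt : Bool) (P : Set (Euc n)) (u : Euc n) : ℝ :=
  ∑ᶠ v ∈ {v | v ∈ normals n P ∧ (if gt then 0 < suppFn P v else suppFn P v < 0)},
    voln1 (face P v) * |suppFn P v| ^ (1 - p) *
      (max ((if pos then (1 : ℝ) else -1) * (inner ℝ v u : ℝ)) 0) ^ p

/-- `h(Π_p^± P, u)^p`, the (p-th power of the support function of the) asymmetric
`L_p`-projection body of `P ∈ 𝒫ⁿₒ`. -/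
def pipFn (n : ℕ) (p : ℝ) (pos : Bool) (P : Set (Euc n)) (u : Euc n) : ℝ :=
  ∑ᶠ v ∈ {v | v ∈ normals n P ∧ (0 : Euc n) ∉ face P v},
    voln1 (face P v) * suppFn P v ^ (1 - p) *
      (max ((if pos then (1 : ℝ) else -1) * (inner ℝ v u : ℝ)) 0) ^ p

/-- `Δ_p^± P`, where `pos = true` gives `Δ_p^+ = h(Π_p^{+,>}·)^p − h(Π_p^{−,<}·)^p` and
`pos = false` gives `Δ_p^- = h(Π_p^{−,>}·)^p − h(Π_p^{+,<}·)^p`. -/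
def delFn (n : ℕ) (p : ℝ) (pos : Bool) (P : Set (Euc n)) (u : Euc n) : ℝ :=
  projFn n p pos true P u - projFn n p (!pos) false P u

/-- Key pointwise lemma for the intersection identity. -/
lemma key_mem {n : ℕ} {P Q : Set (Euc n)} (hPc : IsClosed P) (hQc : IsClosed Q)
    (hU : Convex ℝ (P ∪ Q)) {p q : Euc n} {t s : ℝ}
    (ht : t ∈ Icc (0:ℝ) 1) (hs : s ∈ Icc (0:ℝ) 1) (hp : p ∈ P) (hq : q ∈ Q)
    (hx : t • p = s • q) (hts : t ≤ s) :
    t • p ∈ convexHull ℝ (insert (0 : Euc n) (P ∩ Q)) := by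
  rcases eq_or_lt_of_le ht.1 with h0 | h0
  · rw [← h0, zero_smul]
    exact subset_convexHull ℝ _ (mem_insert _ _)
  have hs0 : 0 < s := lt_of_lt_of_le h0 hts
  have hqc : q = (t / s) • p := by
    have h := congrArg (fun z => s⁻¹ • z) hx
    simp only [smul_smul, inv_mul_cancel₀ hs0.ne', one_smul] at h
    rw [← h]
    congr 1
    rw [div_eq_inv_mul]
  set c := t / s with hc
  have hc0 : 0 < c := div_pos h0 hs0
  have hc1 : c ≤ 1 := (div_le_one hs0).2 hts
  -- cover Icc c 1 by the closed sets {λ | λ•p ∈ P} and {λ | λ•p ∈ Q}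
  have hcont : Continuous fun lam : ℝ => lam • p := by fun_prop
  have hcover : Icc c 1 ⊆ {lam : ℝ | lam • p ∈ P} ∪ {lam : ℝ | lam • p ∈ Q} := by
    intro lam hlam
    rw [← segment_eq_Icc hc1] at hlam
    obtain ⟨a, b, ha, hb, hab, hlam⟩ := hlam
    have heq : lam • p = a • q + b • p := by
      rw [hqc, smul_smul, ← hlam, add_smul]
      simp [smul_eq_mul]
    have hmem : a • q + b • p ∈ P ∪ Q :=
      hU (mem_union_right _ hq) (mem_union_left _ hp) ha hb hab
    rw [← heq] at hmem
    exact hmem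
  obtain ⟨lam, hlamI, hlamP, hlamQ⟩ :
      ∃ lam, lam ∈ Icc c 1 ∧ lam • p ∈ P ∧ lam • p ∈ Q := by
    have := isPreconnected_closed_iff.1 (isPreconnected_Icc (a := c) (b := 1))
      {lam : ℝ | lam • p ∈ P} {lam : ℝ | lam • p ∈ Q}
      (hPc.preimage hcont) (hQc.preimage hcont) hcover
      ⟨1, ⟨right_mem_Icc.2 hc1, by simpa using hp⟩⟩
      ⟨c, ⟨left_mem_Icc.2 hc1, by rw [mem_setOf_eq, ← hqc]; exact hq⟩⟩
    obtain ⟨lam, h1, h2, h3⟩ := this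
    exact ⟨lam, h1, h2, h3⟩
  have hlam0 : 0 < lam := lt_of_lt_of_le hc0 hlamI.1
  have htlam : t ≤ lam := le_trans (le_trans (by
      rw [hc]; exact le_div_self ht.1 hs0 hs.2) (le_refl c)) hlamI.1
  have hx2 : t • p = (1 - t / lam) • (0 : Euc n) + (t / lam) • (lam • p) := by
    rw [smul_zero, zero_add, smul_smul, div_mul_cancel₀ _ hlam0.ne']
  have hmu1 : t / lam ≤ 1 := (div_le_one hlam0).2 htlam
  have hmu0 : (0:ℝ) ≤ t / lam := by positivity
  rw [hx2]
  exact (convex_convexHull ℝ (insert (0 : Euc n) (P ∩ Q)))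
    (subset_convexHull ℝ _ (mem_insert _ _))
    (subset_convexHull ℝ _ (mem_insert_of_mem _ (mem_inter hlamP hlamQ)))
    (by linarith) hmu0 (by ring)

lemma union_hull {n : ℕ} {P Q : Set (Euc n)} (hPconv : Convex ℝ P) (hQconv : Convex ℝ Q)
    (hU : Convex ℝ (P ∪ Q)) (hPne : P.Nonempty) (hQne : Q.Nonempty) :
    convexHull ℝ (insert (0 : Euc n) P) ∪ convexHull ℝ (insert (0 : Euc n) Q)
      = convexHull ℝ (insert (0 : Euc n) (P ∪ Q)) := by
  rw [convexHull_insert hPne, convexHull_insert hQne,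
    convexHull_insert (hPne.mono subset_union_left), hPconv.convexHull_eq,
    hQconv.convexHull_eq, hU.convexHull_eq, ← convexJoin_union_right]

lemma inter_hull {n : ℕ} {P Q : Set (Euc n)} (hPconv : Convex ℝ P) (hQconv : Convex ℝ Q)
    (hPc : IsClosed P) (hQc : IsClosed Q)
    (hU : Convex ℝ (P ∪ Q)) (hPne : P.Nonempty) (hQne : Q.Nonempty) :
    convexHull ℝ (insert (0 : Euc n) P) ∩ convexHull ℝ (insert (0 : Euc n) Q)
      = convexHull ℝ (insert (0 : Euc n) (P ∩ Q)) := by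
  apply Subset.antisymm
  · rintro x ⟨hx1, hx2⟩
    rw [convexHull_insert hPne, hPconv.convexHull_eq, convexJoin_singleton_left] at hx1
    rw [convexHull_insert hQne, hQconv.convexHull_eq, convexJoin_singleton_left] at hx2
    simp only [mem_iUnion, exists_prop] at hx1 hx2
    obtain ⟨p, hp, hxp⟩ := hx1
    obtain ⟨q, hq, hxq⟩ := hx2
    rw [segment_eq_image] at hxp hxq
    obtain ⟨t, ht, hxt⟩ := hxp
    obtain ⟨s, hs, hxs⟩ := hxq
    simp only [smul_zero, zero_add] at hxt hxs
    rcases le_total t s with hts | hst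
    · rw [← hxt]
      exact key_mem hPc hQc hU ht hs hp hq (by rw [hxt, hxs]) hts
    · rw [← hxs, inter_comm]
      exact key_mem hQc hPc (by rwa [union_comm]) hs ht hq hp (by rw [hxt, hxs]) hst
  · exact subset_inter
      (convexHull_mono (insert_subset_insert inter_subset_left))
      (convexHull_mono (insert_subset_insert inter_subset_right))

/-- If `Φ` is a valuation on `𝒫ⁿₒ` with values in an abelian group, then
`Ψ(P) = Φ(conv({o} ∪ P))` defines a valuation on `𝒫ⁿ`. -/
theorem stmt2 (n : ℕ) (hn : 1 ≤ n) {A : Type*} [AddCommGroup A]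
    (Φ : Set (Euc n) → A)
    (hval : ∀ P Q : Set (Euc n), IsPolytope n P → (0 : Euc n) ∈ P →
      IsPolytope n Q → (0 : Euc n) ∈ Q → IsPolytope n (P ∪ Q) →
      Φ (P ∪ Q) + Φ (P ∩ Q) = Φ P + Φ Q)
    (Ψ : Set (Euc n) → A)
    (hΨ : ∀ P : Set (Euc n), Ψ P = Φ (convexHull ℝ (insert (0 : Euc n) P))) :
    ∀ P Q : Set (Euc n), IsPolytope n P → IsPolytope n Q → IsPolytope n (P ∪ Q) →
      Ψ (P ∪ Q) + Ψ (P ∩ Q) = Ψ P + Ψ Q := by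
  intro P Q hP hQ hPQ
  obtain ⟨S, hSne, hPeq⟩ := hP
  obtain ⟨T, hTne, hQeq⟩ := hQ
  obtain ⟨U, hUne, hUeq⟩ := hPQ
  have hPconv : Convex ℝ P := hPeq ▸ convex_convexHull ℝ _
  have hQconv : Convex ℝ Q := hQeq ▸ convex_convexHull ℝ _
  have hUconv : Convex ℝ (P ∪ Q) := hUeq ▸ convex_convexHull ℝ _
  have hPc : IsClosed P := hPeq ▸ (S.finite_toSet.isCompact_convexHull ℝ).isClosed
  have hQc : IsClosed Q := hQeq ▸ (T.finite_toSet.isCompact_convexHull ℝ).isClosed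
  have hPne : P.Nonempty := hPeq ▸ (Finset.coe_nonempty.2 hSne).mono (subset_convexHull ℝ _)
  have hQne : Q.Nonempty := hQeq ▸ (Finset.coe_nonempty.2 hTne).mono (subset_convexHull ℝ _)
  have key : ∀ R : Set (Euc n), IsPolytope n R →
      IsPolytope n (convexHull ℝ (insert (0 : Euc n) R)) := by
    rintro R ⟨V, hV, rfl⟩
    classical
    refine ⟨insert 0 V, Finset.insert_nonempty _ _, ?_⟩
    rw [Finset.coe_insert, Set.insert_eq, Set.insert_eq, convexHull_convexHull_union_right]
  have hmem0 : ∀ R : Set (Euc n), (0 : Euc n) ∈ convexHull ℝ (insert (0 : Euc n) R) :=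
    fun R => subset_convexHull ℝ _ (mem_insert _ _)
  have hunion := union_hull hPconv hQconv hUconv hPne hQne
  have hinter := inter_hull hPconv hQconv hPc hQc hUconv hPne hQne
  rw [hΨ, hΨ, hΨ, hΨ, ← hunion, ← hinter]
  exact hval _ _ (key P ⟨S, hSne, hPeq⟩) (hmem0 P) (key Q ⟨T, hTne, hQeq⟩) (hmem0 Q)
    (hunion ▸ key (P ∪ Q) ⟨U, hUne, hUeq⟩)
end
end

section
/- Let n ≥ 1 and fix a unit vector v ∈ S^{n−1}. Then the map P ↦ vol_{n−1}(F(P,v)) is a real-valued valuation on 𝒫^n, i.e. vol_{n−1}(F(P∪Q,v)) + vol_{n−1}(F(P∩Q,v)) = vol_{n−1}(F(P,v)) + vol_{n−1}(F(Q,v)) for all P, Q ∈ 𝒫^n with P ∪ Q ∈ 𝒫^n. -/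
open scoped Pointwise
open MeasureTheory Set

noncomputable section

section Aux

variable {n : ℕ} {P Q K : Set (Euc n)} {v : Euc n} {x : Euc n}

private lemma contInner (v : Euc n) : Continuous fun x : Euc n => (inner ℝ x v : ℝ) :=
  Continuous.inner continuous_id continuous_const

private lemma IsPolytope.isCompact (h : IsPolytope n P) : IsCompact P := by
  obtain ⟨S, _, rfl⟩ := h
  exact S.finite_toSet.isCompact_convexHull ℝ

private lemma IsPolytope.nonempty (h : IsPolytope n P) : P.Nonempty := by
  obtain ⟨S, ⟨x, hx⟩, rfl⟩ := h
  exact ⟨x, subset_convexHull ℝ _ hx⟩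

private lemma IsPolytope.convex (h : IsPolytope n P) : Convex ℝ P := by
  obtain ⟨S, _, rfl⟩ := h; exact convex_convexHull ℝ _

private lemma bddAbove_inner (hK : IsCompact K) (v : Euc n) :
    BddAbove ((fun x => (inner ℝ x v : ℝ)) '' K) :=
  (hK.image (contInner v)).bddAbove

private lemma inner_le_suppFn (hK : IsCompact K) (hx : x ∈ K) :
    (inner ℝ x v : ℝ) ≤ suppFn K v :=
  le_csSup (bddAbove_inner hK v) ⟨x, hx, rfl⟩

private lemma face_nonempty (hK : IsCompact K) (hne : K.Nonempty) :
    (face K v).Nonempty := by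
  obtain ⟨x, hx, hmax⟩ := hK.exists_isMaxOn hne (contInner v).continuousOn
  refine ⟨x, hx, le_antisymm (inner_le_suppFn hK hx) (csSup_le (hne.image _) ?_)⟩
  rintro a ⟨y, hy, rfl⟩; exact hmax hy

private lemma face_closed (hK : IsCompact K) : IsClosed (face K v) := by
  have : face K v = K ∩ (fun x : Euc n => (inner ℝ x v : ℝ)) ⁻¹' {suppFn K v} := by
    ext x; simp [face, Set.mem_preimage]
  rw [this]
  exact hK.isClosed.inter (isClosed_singleton.preimage (contInner v))

private lemma suppFn_union (hP : IsCompact P) (hPne : P.Nonempty)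
    (hQ : IsCompact Q) (hQne : Q.Nonempty) :
    suppFn (P ∪ Q) v = max (suppFn P v) (suppFn Q v) := by
  unfold suppFn
  rw [Set.image_union, csSup_union (bddAbove_inner hP v) (hPne.image _)
    (bddAbove_inner hQ v) (hQne.image _)]

private lemma suppFn_mono (hB : IsCompact Q) (hne : P.Nonempty) (hsub : P ⊆ Q) :
    suppFn P v ≤ suppFn Q v :=
  csSup_le_csSup (bddAbove_inner hB v) (hne.image _) (Set.image_mono hsub)

end Aux

section Fin
variable {n : ℕ}

private lemma hfin (hn : 1 ≤ n) {v : Euc n} (hv : ‖v‖ = 1) {s : Set (Euc n)} (c : ℝ)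
    (hb : Bornology.IsBounded s) (hc : ∀ x ∈ s, (inner ℝ x v : ℝ) = c) :
    μH[(n : ℝ) - 1] s ≠ ⊤ := by
  have hd : (0 : ℝ) ≤ (n : ℝ) - 1 := by
    have : (1 : ℝ) ≤ (n : ℝ) := by exact_mod_cast hn
    linarith
  have hv0 : v ≠ 0 := by intro h; rw [h] at hv; simp at hv
  set W := (ℝ ∙ v)ᗮ with hW
  have hiso : Isometry (fun x : Euc n => x - c • v) :=
    Isometry.of_dist_eq fun a b => by simp [dist_eq_norm, sub_sub_sub_cancel_right]
  set s' := (fun x : Euc n => x - c • v) '' s with hs'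
  have h1 : μH[(n : ℝ) - 1] s = μH[(n : ℝ) - 1] s' :=
    (hiso.hausdorffMeasure_image (Or.inl hd) s).symm
  have hsub : s' ⊆ (W : Set (Euc n)) := by
    rintro _ ⟨x, hx, rfl⟩
    rw [SetLike.mem_coe, hW, Submodule.mem_orthogonal_singleton_iff_inner_right]
    have h2 : (inner ℝ v x : ℝ) = c := by rw [real_inner_comm]; exact hc x hx
    rw [inner_sub_right, h2, real_inner_smul_right, real_inner_self_eq_norm_sq, hv]
    ring
  set t : Set W := (Subtype.val) ⁻¹' s' with ht
  have h2 : s' = Subtype.val '' t := by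
    rw [ht, Set.image_preimage_eq_of_subset (by rwa [Subtype.range_coe])]
  have h3 : μH[(n : ℝ) - 1] s' = μH[(n : ℝ) - 1] t := by
    rw [h2, isometry_subtype_coe.hausdorffMeasure_image (Or.inl hd)]
  set m := Module.finrank ℝ W with hmdef
  set B := stdOrthonormalBasis ℝ W with hB
  have h4 : μH[(n : ℝ) - 1] t = μH[(n : ℝ) - 1] (⇑B.repr '' t) :=
    (B.repr.isometry.hausdorffMeasure_image (Or.inl hd) t).symm
  have hm : m = n - 1 := by
    have h5 : Module.finrank ℝ (ℝ ∙ v) = 1 := finrank_span_singleton hv0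
    have h6 := Submodule.finrank_add_finrank_orthogonal (K := ((ℝ ∙ v) : Submodule ℝ (Euc n)))
    rw [h5, finrank_euclideanSpace_fin] at h6
    rw [hmdef, hW]
    omega
  have hdm : (n : ℝ) - 1 = (m : ℝ) := by
    rw [hm]
    rw [Nat.cast_sub hn]
    norm_num
  obtain ⟨R, hR⟩ := isBounded_iff_forall_norm_le.mp hb
  have himg : ⇑B.repr '' t ⊆ Metric.closedBall 0 (R + ‖c • v‖) := by
    rintro _ ⟨w, hw, rfl⟩
    rw [mem_closedBall_zero_iff, B.repr.norm_map]
    obtain ⟨x, hx, hxw⟩ := hw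
    have hww : ‖w‖ = ‖x - c • v‖ := by rw [Submodule.coe_norm, ← hxw]
    rw [hww]
    calc ‖x - c • v‖ ≤ ‖x‖ + ‖c • v‖ := norm_sub_le _ _
      _ ≤ R + ‖c • v‖ := by linarith [hR x hx]
  rw [h1, h3, h4, hdm]
  refine ne_top_of_le_ne_top ?_ (measure_mono himg)
  set r := R + ‖c • v‖
  obtain ⟨C, hC⟩ : ∃ C : NNReal, AntilipschitzWith C (WithLp.equiv 2 (Fin m → ℝ)) :=
    ⟨_, PiLp.antilipschitzWith_ofLp 2 _⟩
  refine ne_top_of_le_ne_top ?_ (hC.le_hausdorffMeasure_image (by positivity) _)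
  refine ENNReal.mul_ne_top (ENNReal.rpow_ne_top_of_nonneg (by positivity) ENNReal.coe_ne_top) ?_
  have hcard : ((m : ℝ)) = ((Fintype.card (Fin m) : ℕ) : ℝ) := by simp
  rw [hcard, hausdorffMeasure_pi_real]
  have hsub2 : (WithLp.equiv 2 (Fin m → ℝ)) '' Metric.closedBall 0 r ⊆
      Metric.closedBall (0 : Fin m → ℝ) r := by
    rintro _ ⟨x, hx, rfl⟩
    rw [mem_closedBall_zero_iff] at hx ⊢
    calc ‖(WithLp.equiv 2 (Fin m → ℝ)) x‖ ≤ ‖x‖ := by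
          have := (PiLp.lipschitzWith_ofLp 2 (fun _ : Fin m => ℝ)).dist_le_mul x 0
          simpa [dist_eq_norm] using this
      _ ≤ r := hx
  exact ne_top_of_le_ne_top measure_closedBall_lt_top.ne (measure_mono hsub2)

end Fin


section Main

variable {n : ℕ}

private lemma seg_mem_union {P Q : Set (Euc n)} (hconv : Convex ℝ (P ∪ Q))
    {x y : Euc n} (hx : x ∈ P ∪ Q) (hy : y ∈ P ∪ Q) {t : ℝ} (ht : t ∈ Icc (0:ℝ) 1) :
    x + t • (y - x) ∈ P ∪ Q := by
  have hmem : x + t • (y - x) ∈ segment ℝ x y := by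
    rw [segment_eq_image']; exact ⟨t, ht, rfl⟩
  exact hconv.segment_subset hx hy hmem

private lemma seg_inner {x y v : Euc n} (t : ℝ) :
    (inner ℝ (x + t • (y - x)) v : ℝ) =
      (inner ℝ x v : ℝ) + t * ((inner ℝ y v : ℝ) - (inner ℝ x v : ℝ)) := by
  rw [inner_add_left, real_inner_smul_left, inner_sub_left]

private lemma main_aux (hn : 1 ≤ n) {v : Euc n} (hv : ‖v‖ = 1)
    {P Q : Set (Euc n)} (hP : IsPolytope n P) (hQ : IsPolytope n Q)
    (hPQ : IsPolytope n (P ∪ Q)) (hle : suppFn P v ≤ suppFn Q v) :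
    voln1 (face (P ∪ Q) v) + voln1 (face (P ∩ Q) v) =
      voln1 (face P v) + voln1 (face Q v) := by
  have cP := hP.isCompact
  have cQ := hQ.isCompact
  have neP := hP.nonempty
  have neQ := hQ.nonempty
  have hU : suppFn (P ∪ Q) v = suppFn Q v := by
    rw [suppFn_union cP neP cQ neQ, max_eq_right hle]
  rcases lt_or_eq_of_le hle with hlt | heq
  · -- strict case
    have faceU : face (P ∪ Q) v = face Q v := by
      ext x
      constructor
      · rintro ⟨hxPQ, hxin⟩
        rw [hU] at hxin
        rcases hxPQ with hxP | hxQ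
        · exact absurd hxin (ne_of_lt (lt_of_le_of_lt (inner_le_suppFn cP hxP) hlt))
        · exact ⟨hxQ, hxin⟩
      · rintro ⟨hxQ, hxin⟩
        exact ⟨Or.inr hxQ, by rw [hU]; exact hxin⟩
    obtain ⟨y, hyQ, hyv⟩ := face_nonempty cQ neQ (v := v)
    have key : face P v ⊆ Q := by
      intro x hx
      have hQt : ∀ t : ℝ, t ∈ Ioc (0:ℝ) 1 → x + t • (y - x) ∈ Q := by
        intro t ht
        rcases seg_mem_union hPQ.convex (Or.inl hx.1) (Or.inr hyQ) ⟨ht.1.le, ht.2⟩ with h | h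
        · exfalso
          have h1 : (inner ℝ (x + t • (y - x)) v : ℝ) ≤ suppFn P v := inner_le_suppFn cP h
          rw [seg_inner, hx.2, hyv] at h1
          nlinarith [ht.1]
        · exact h
      haveI : (nhdsWithin (0:ℝ) (Ioc (0:ℝ) 1)).NeBot := by
        refine mem_closure_iff_nhdsWithin_neBot.mp ?_
        rw [closure_Ioc (zero_ne_one)]
        exact ⟨le_rfl, zero_le_one⟩
      have htd : Filter.Tendsto (fun t : ℝ => x + t • (y - x))
          (nhdsWithin 0 (Ioc (0:ℝ) 1)) (nhds x) := by
        have hcont : Continuous fun t : ℝ => x + t • (y - x) := by continuity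
        have := hcont.tendsto 0
        simp only [zero_smul, add_zero] at this
        exact this.mono_left nhdsWithin_le_nhds
      exact cQ.isClosed.mem_of_tendsto htd
        (Filter.eventually_of_mem self_mem_nhdsWithin fun t ht => hQt t ht)
    obtain ⟨x0, hx0⟩ := face_nonempty cP neP (v := v)
    have hIsupp : suppFn (P ∩ Q) v = suppFn P v := by
      refine le_antisymm (suppFn_mono cP ⟨x0, hx0.1, key hx0⟩ inter_subset_left) ?_
      rw [← hx0.2]
      exact inner_le_suppFn (cP.inter_right cQ.isClosed) ⟨hx0.1, key hx0⟩
    have faceI : face (P ∩ Q) v = face P v := by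
      ext x
      constructor
      · rintro ⟨⟨hxP, _⟩, hxin⟩
        exact ⟨hxP, by rw [← hIsupp]; exact hxin⟩
      · intro hx
        exact ⟨⟨hx.1, key hx⟩, by rw [hIsupp]; exact hx.2⟩
    rw [faceU, faceI]
    ring
  · -- equal case
    have faceU : face (P ∪ Q) v = face P v ∪ face Q v := by
      ext x
      constructor
      · rintro ⟨hxPQ, hxin⟩
        rw [hU] at hxin
        rcases hxPQ with hxP | hxQ
        · exact Or.inl ⟨hxP, by rw [heq]; exact hxin⟩
        · exact Or.inr ⟨hxQ, hxin⟩
      · rintro (⟨hxP, hxin⟩ | ⟨hxQ, hxin⟩)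
        · exact ⟨Or.inl hxP, by rw [hU, ← heq]; exact hxin⟩
        · exact ⟨Or.inr hxQ, by rw [hU]; exact hxin⟩
    -- the faces intersect
    obtain ⟨x, hxP⟩ := face_nonempty cP neP (v := v)
    obtain ⟨y, hyQ⟩ := face_nonempty cQ neQ (v := v)
    have hfc : ∀ t : ℝ, t ∈ Icc (0:ℝ) 1 →
        x + t • (y - x) ∈ face P v ∪ face Q v := by
      intro t ht
      have hin : (inner ℝ (x + t • (y - x)) v : ℝ) = suppFn P v := by
        rw [seg_inner, hxP.2, hyQ.2, ← heq]; ring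
      rcases seg_mem_union hPQ.convex (Or.inl hxP.1) (Or.inr hyQ.1) ht with h | h
      · exact Or.inl ⟨h, hin⟩
      · exact Or.inr ⟨h, by rw [← heq]; exact hin⟩
    have hnint : (face P v ∩ face Q v).Nonempty := by
      by_contra hdis
      rw [Set.not_nonempty_iff_eq_empty] at hdis
      have hclP := face_closed cP (v := v)
      have hclQ := face_closed cQ (v := v)
      set g : ℝ → ℝ := fun t =>
        Metric.infDist (x + t • (y - x)) (face P v) -
          Metric.infDist (x + t • (y - x)) (face Q v) with hg
      have hgc : Continuous g := by
        apply Continuous.sub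
        · exact (Metric.continuous_infDist_pt _).comp (by continuity)
        · exact (Metric.continuous_infDist_pt _).comp (by continuity)
      have hdisj : ∀ z : Euc n, z ∈ face P v → z ∉ face Q v := by
        intro z hz hz'
        exact absurd (Set.mem_inter hz hz') (by rw [hdis]; exact Set.notMem_empty z)
      have hg0 : g 0 < 0 := by
        have h1 : Metric.infDist (x + (0:ℝ) • (y - x)) (face P v) = 0 := by
          simp only [zero_smul, add_zero]
          exact Metric.infDist_zero_of_mem hxP
        have h2 : 0 < Metric.infDist (x + (0:ℝ) • (y - x)) (face Q v) := by
          simp only [zero_smul, add_zero]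
          exact (hclQ.notMem_iff_infDist_pos ⟨y, hyQ⟩).mp (hdisj x hxP)
        rw [hg]; simp only [h1]; linarith
      have hg1 : 0 < g 1 := by
        have h1 : Metric.infDist (x + (1:ℝ) • (y - x)) (face Q v) = 0 := by
          simp only [one_smul]
          rw [show x + (y - x) = y by abel]
          exact Metric.infDist_zero_of_mem hyQ
        have h2 : 0 < Metric.infDist (x + (1:ℝ) • (y - x)) (face P v) := by
          simp only [one_smul]
          rw [show x + (y - x) = y by abel]
          refine (hclP.notMem_iff_infDist_pos ⟨x, hxP⟩).mp ?_
          intro hy'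
          exact hdisj y hy' hyQ
        rw [hg]; simp only [h1]; linarith
      obtain ⟨t, ht01, hgt⟩ := intermediate_value_Icc (zero_le_one (α := ℝ))
        hgc.continuousOn ⟨hg0.le, hg1.le⟩
      rcases hfc t ht01 with h | h
      · have hdP : Metric.infDist (x + t • (y - x)) (face P v) = 0 :=
          Metric.infDist_zero_of_mem h
        have hdQ : Metric.infDist (x + t • (y - x)) (face Q v) = 0 := by
          rw [hg] at hgt; simp only [hdP] at hgt; linarith
        exact hdisj _ h ((hclQ.mem_iff_infDist_zero ⟨y, hyQ⟩).mpr hdQ)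
      · have hdQ : Metric.infDist (x + t • (y - x)) (face Q v) = 0 :=
          Metric.infDist_zero_of_mem h
        have hdP : Metric.infDist (x + t • (y - x)) (face P v) = 0 := by
          rw [hg] at hgt; simp only [hdQ] at hgt; linarith
        exact hdisj _ ((hclP.mem_iff_infDist_zero ⟨x, hxP⟩).mpr hdP) h
    obtain ⟨z, hzP, hzQ⟩ := hnint
    have hIsupp : suppFn (P ∩ Q) v = suppFn P v := by
      refine le_antisymm (suppFn_mono cP ⟨z, hzP.1, hzQ.1⟩ inter_subset_left) ?_
      rw [← hzP.2]
      exact inner_le_suppFn (cP.inter_right cQ.isClosed) ⟨hzP.1, hzQ.1⟩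
    have faceI : face (P ∩ Q) v = face P v ∩ face Q v := by
      ext w
      constructor
      · rintro ⟨⟨hwP, hwQ⟩, hwin⟩
        rw [hIsupp] at hwin
        exact ⟨⟨hwP, hwin⟩, ⟨hwQ, by rw [← heq]; exact hwin⟩⟩
      · rintro ⟨⟨hwP, hwin⟩, ⟨hwQ, _⟩⟩
        exact ⟨⟨hwP, hwQ⟩, by rw [hIsupp]; exact hwin⟩
    rw [faceU, faceI]
    -- measure additivity
    have hfP : μH[(n : ℝ) - 1] (face P v) ≠ ⊤ :=
      hfin hn hv (suppFn P v) (cP.isBounded.subset fun w hw => hw.1) fun w hw => hw.2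
    have hfQ : μH[(n : ℝ) - 1] (face Q v) ≠ ⊤ :=
      hfin hn hv (suppFn Q v) (cQ.isBounded.subset fun w hw => hw.1) fun w hw => hw.2
    have hfU : μH[(n : ℝ) - 1] (face P v ∪ face Q v) ≠ ⊤ :=
      ne_top_of_le_ne_top (ENNReal.add_ne_top.mpr ⟨hfP, hfQ⟩) (measure_union_le _ _)
    have hfI : μH[(n : ℝ) - 1] (face P v ∩ face Q v) ≠ ⊤ :=
      ne_top_of_le_ne_top hfP (measure_mono inter_subset_left)
    have key : μH[(n : ℝ) - 1] (face P v ∪ face Q v) + μH[(n : ℝ) - 1] (face P v ∩ face Q v) =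
        μH[(n : ℝ) - 1] (face P v) + μH[(n : ℝ) - 1] (face Q v) :=
      measure_union_add_inter _ ((face_closed cQ).measurableSet)
    simp only [voln1]
    rw [← ENNReal.toReal_add hfU hfI, key, ENNReal.toReal_add hfP hfQ]

end Main


/-- For a fixed unit vector `v`, the map `P ↦ vol_{n−1}(F(P,v))` is a
real-valued valuation on `𝒫ⁿ`. -/
theorem stmt6 (n : ℕ) (hn : 1 ≤ n) (v : Euc n) (hv : ‖v‖ = 1) :
    ∀ P Q : Set (Euc n), IsPolytope n P → IsPolytope n Q → IsPolytope n (P ∪ Q) →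
      voln1 (face (P ∪ Q) v) + voln1 (face (P ∩ Q) v) =
        voln1 (face P v) + voln1 (face Q v) := by
  intro P Q hP hQ hPQ
  rcases le_total (suppFn P v) (suppFn Q v) with hle | hle
  · exact main_aux hn hv hP hQ hPQ hle
  · have := main_aux hn hv hQ hP (by rwa [Set.union_comm]) hle
    rw [Set.union_comm Q P, Set.inter_comm Q P] at this
    linarith
end
end
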